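/- For positive integers m ≥ 2 and n with m ≤ 2n, and any j ∈ [-n:n]\{0}, the coefficient magnitude satisfies |a^{(m)}_{n,j}| ≤ (n!)² · m^{2n} / (|j| · (m-1)!). -/

import Mathlib

lemma prodAbsIcc (n : ℕ) :
    ∏ l ∈ (Finset.Icc (-(n : ℤ)) n).erase 0, |l| = (n.factorial : ℤ) ^ 2 := by
  induction n with
  | zero => simp
  | succ n ih =>
    have hset : (Finset.Icc (-(↑(n+1) : ℤ)) (↑(n+1))).erase 0
        = insert (-(↑(n+1) : ℤ)) (insert ((↑(n+1) : ℤ))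
            ((Finset.Icc (-(n : ℤ)) n).erase 0)) := by
      ext x
      simp only [Finset.mem_erase, Finset.mem_Icc, Finset.mem_insert]
      push_cast
      omega
    have h2 : ((↑(n+1) : ℤ)) ∉ (Finset.Icc (-(n : ℤ)) n).erase 0 := by
      simp only [Finset.mem_erase, Finset.mem_Icc]
      push_cast
      omega
    have h1 : (-(↑(n+1) : ℤ)) ∉ insert ((↑(n+1) : ℤ))
        ((Finset.Icc (-(n : ℤ)) n).erase 0) := by
      simp only [Finset.mem_insert, Finset.mem_erase, Finset.mem_Icc]
      push_cast
      omega
    rw [hset, Finset.prod_insert h1, Finset.prod_insert h2, ih]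
    rw [abs_neg, abs_of_nonneg (by positivity)]
    rw [Nat.factorial_succ]
    push_cast
    ring

lemma step_ineq (a b : ℕ) (hb : 3 ≤ b) (hba : b ≤ a) : (a+1)^b ≤ b * a^b := by
  have ha : (1 : ℝ) ≤ (a : ℝ) := by exact_mod_cast (show 1 ≤ a by omega)
  have hapos : (0 : ℝ) < (a : ℝ) := lt_of_lt_of_le zero_lt_one ha
  have h1 : (a : ℝ) + 1 ≤ a * Real.exp ((a : ℝ)⁻¹) := by
    have h := Real.add_one_le_exp ((a : ℝ)⁻¹)
    have := mul_le_mul_of_nonneg_left h hapos.le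
    calc (a : ℝ) + 1 = a * ((a : ℝ)⁻¹ + 1) := by field_simp; ring
      _ ≤ a * Real.exp ((a : ℝ)⁻¹) := this
  have h2 : ((a : ℝ) + 1)^b ≤ ((a : ℝ) * Real.exp ((a : ℝ)⁻¹))^b :=
    pow_le_pow_left₀ (by positivity) h1 b
  have h3 : ((a : ℝ) * Real.exp ((a : ℝ)⁻¹))^b
      = (a : ℝ)^b * Real.exp ((b : ℝ) * (a : ℝ)⁻¹) := by
    rw [mul_pow, ← Real.exp_nat_mul]
  have h4 : Real.exp ((b : ℝ) * (a : ℝ)⁻¹) ≤ Real.exp 1 := by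
    apply Real.exp_le_exp.mpr
    rw [← div_eq_mul_inv, div_le_one hapos]
    exact_mod_cast hba
  have h5 : Real.exp 1 ≤ 3 := Real.exp_one_lt_d9.le.trans (by norm_num)
  have hfinal : ((a : ℝ) + 1)^b ≤ (b : ℝ) * (a : ℝ)^b := by
    have hb3 : (3 : ℝ) ≤ (b : ℝ) := by exact_mod_cast hb
    have hpow : (0 : ℝ) ≤ (a : ℝ)^b := by positivity
    calc ((a : ℝ) + 1)^b ≤ (a : ℝ)^b * Real.exp ((b : ℝ) * (a : ℝ)⁻¹) := by
          rw [← h3]; exact h2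
      _ ≤ (a : ℝ)^b * 3 := by
          apply mul_le_mul_of_nonneg_left (h4.trans h5) hpow
      _ ≤ (b : ℝ) * (a : ℝ)^b := by nlinarith
  exact_mod_cast hfinal

lemma pow_self_le (b : ℕ) (hb : 3 ≤ b) : ∀ a, b ≤ a → a^b ≤ b^a := by
  intro a hba
  induction a, hba using Nat.le_induction with
  | base => exact le_refl _
  | succ a hba ih =>
    calc (a+1)^b ≤ b * a^b := step_ineq a b hb hba
      _ ≤ b * b^a := Nat.mul_le_mul_left _ ih
      _ = b^(a+1) := by ring

lemma pow_key (a b : ℕ) (hb : 2 ≤ b) (hba : b ≤ a) : a^(b-1) ≤ b^a := by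
  rcases eq_or_lt_of_le hb with h | h
  · rw [← h]
    simpa using (show a < 2 ^ a from Nat.lt_two_pow_self).le
  · have hb3 : 3 ≤ b := h
    calc a^(b-1) ≤ a^b := Nat.pow_le_pow_right (by omega) (by omega)
      _ ≤ b^a := pow_self_le b hb3 a hba

theorem coef_a_bound (m n : ℕ) (hm : 2 ≤ m) (hn : 1 ≤ n) (hmn : m ≤ 2 * n)
    (j : ℤ) (hj : j ∈ Finset.Icc (-(n : ℤ)) n) (hj0 : j ≠ 0) :
    |∑ T ∈ Finset.powersetCard (2 * n - m)
        (((Finset.Icc (-(n : ℤ)) n).erase 0).erase j), ∏ l ∈ T, (l : ℝ)|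
      ≤ ((n.factorial : ℝ)) ^ 2 * (m : ℝ) ^ (2 * n) /
          ((|j| : ℝ) * ((m - 1).factorial : ℝ)) := by
  set S := ((Finset.Icc (-(n : ℤ)) n).erase 0).erase j with hSdef
  have hjmem : j ∈ (Finset.Icc (-(n : ℤ)) n).erase 0 := Finset.mem_erase.mpr ⟨hj0, hj⟩
  have hprodS : |j| * ∏ l ∈ S, |l| = (n.factorial : ℤ) ^ 2 := by
    rw [hSdef, Finset.mul_prod_erase _ (fun l => |l|) hjmem, prodAbsIcc]
  have h0mem : (0 : ℤ) ∈ Finset.Icc (-(n : ℤ)) n := by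
    simp only [Finset.mem_Icc]
    constructor <;> [simp; exact_mod_cast Nat.zero_le n]
  have hcard : S.card = 2 * n - 1 := by
    rw [hSdef, Finset.card_erase_of_mem hjmem, Finset.card_erase_of_mem h0mem, Int.card_Icc]
    have h : ((n : ℤ) + 1 - -(n : ℤ)) = ((2 * n + 1 : ℕ) : ℤ) := by push_cast; ring
    rw [h, Int.toNat_natCast]
    omega
  set B : ℝ := ∏ l ∈ S, |(l : ℝ)| with hBdef
  have hBnn : 0 ≤ B := Finset.prod_nonneg fun i _ => abs_nonneg _
  have hB : ∀ T ∈ Finset.powersetCard (2 * n - m) S, |∏ l ∈ T, (l : ℝ)| ≤ B := by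
    intro T hT
    have hTs : T ⊆ S := (Finset.mem_powersetCard.mp hT).1
    have h1 : ∀ i ∈ S, (1 : ℝ) ≤ |(i : ℝ)| := by
      intro i hi
      have hi0 : i ≠ 0 := (Finset.mem_erase.mp ((Finset.mem_erase.mp hi).2)).1
      have h2 : (1 : ℤ) ≤ |i| := Int.one_le_abs (by omega)
      calc (1 : ℝ) ≤ ((|i| : ℤ) : ℝ) := by exact_mod_cast h2
        _ = |(i : ℝ)| := by push_cast; rfl
    rw [Finset.abs_prod, hBdef]
    have hsd : (∏ l ∈ S \ T, |(l : ℝ)|) * ∏ l ∈ T, |(l : ℝ)| = ∏ l ∈ S, |(l : ℝ)| :=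
      Finset.prod_sdiff hTs
    have hone : (1 : ℝ) ≤ ∏ l ∈ S \ T, |(l : ℝ)| := by
      have := Finset.prod_le_prod (s := S \ T) (f := fun _ : ℤ => (1 : ℝ))
        (g := fun l : ℤ => |(l : ℝ)|)
        (fun i _ => zero_le_one) (fun i hi => h1 i (Finset.mem_sdiff.mp hi).1)
      simpa using this
    have hTnn : (0 : ℝ) ≤ ∏ l ∈ T, |(l : ℝ)| := Finset.prod_nonneg fun i _ => abs_nonneg _
    nlinarith
  have step1 : |∑ T ∈ Finset.powersetCard (2 * n - m) S, ∏ l ∈ T, (l : ℝ)|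
      ≤ ((2 * n - 1).choose (2 * n - m) : ℝ) * B := by
    calc |∑ T ∈ Finset.powersetCard (2 * n - m) S, ∏ l ∈ T, (l : ℝ)|
        ≤ ∑ T ∈ Finset.powersetCard (2 * n - m) S, |∏ l ∈ T, (l : ℝ)| :=
          Finset.abs_sum_le_sum_abs _ _
      _ ≤ ∑ _T ∈ Finset.powersetCard (2 * n - m) S, B := Finset.sum_le_sum hB
      _ = ((Finset.powersetCard (2 * n - m) S).card : ℝ) * B := by
          rw [Finset.sum_const, nsmul_eq_mul]
      _ = ((2 * n - 1).choose (2 * n - m) : ℝ) * B := by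
          rw [Finset.card_powersetCard, hcard]
  have hnat : (2 * n - 1).choose (2 * n - m) * (m - 1).factorial ≤ m ^ (2 * n) := by
    have h1 : (2 * n - 1).choose (2 * n - m) = (2 * n - 1).choose (m - 1) := by
      have he : 2 * n - m = (2 * n - 1) - (m - 1) := by omega
      rw [he, Nat.choose_symm (by omega)]
    have h2 : (2 * n - 1).choose (m - 1) * (m - 1).factorial ≤ (2 * n - 1) ^ (m - 1) := by
      rw [mul_comm, ← Nat.descFactorial_eq_factorial_mul_choose]
      exact Nat.descFactorial_le_pow _ _
    calc (2 * n - 1).choose (2 * n - m) * (m - 1).factorial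
        ≤ (2 * n - 1) ^ (m - 1) := by rw [h1]; exact h2
      _ ≤ (2 * n) ^ (m - 1) := Nat.pow_le_pow_left (by omega) _
      _ ≤ m ^ (2 * n) := pow_key (2 * n) m hm hmn
  have hjpos : (0 : ℝ) < ((|j| : ℤ) : ℝ) := by
    exact_mod_cast abs_pos.mpr hj0
  have hfpos : (0 : ℝ) < ((m - 1).factorial : ℝ) := by
    exact_mod_cast Nat.factorial_pos _
  have hBj : B * ((|j| : ℤ) : ℝ) = (n.factorial : ℝ) ^ 2 := by
    have h := congrArg (fun x : ℤ => (x : ℝ)) hprodS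
    push_cast at h
    rw [hBdef]
    push_cast
    linarith
  have hcast : |(j : ℝ)| = ((|j| : ℤ) : ℝ) := by push_cast; rfl
  rw [hcast, le_div_iff₀ (by positivity)]
  calc |∑ T ∈ Finset.powersetCard (2 * n - m) S, ∏ l ∈ T, (l : ℝ)|
        * (((|j| : ℤ) : ℝ) * ((m - 1).factorial : ℝ))
      ≤ (((2 * n - 1).choose (2 * n - m) : ℝ) * B)
        * (((|j| : ℤ) : ℝ) * ((m - 1).factorial : ℝ)) := by
        apply mul_le_mul_of_nonneg_right step1 (by positivity)
    _ = (((2 * n - 1).choose (2 * n - m) : ℝ) * ((m - 1).factorial : ℝ))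
        * (B * ((|j| : ℤ) : ℝ)) := by ring
    _ = (((2 * n - 1).choose (2 * n - m) * (m - 1).factorial : ℕ) : ℝ)
        * ((n.factorial : ℝ) ^ 2) := by rw [hBj]; push_cast; ring
    _ ≤ ((m : ℝ) ^ (2 * n)) * ((n.factorial : ℝ) ^ 2) := by
        apply mul_le_mul_of_nonneg_right _ (by positivity)
        exact_mod_cast hnat
    _ = (n.factorial : ℝ) ^ 2 * (m : ℝ) ^ (2 * n) := by ring
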